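/- arXiv:1809.09983 — 2 statements merged into one kernel-verified Lean document; each statement's English description precedes it below -/
import Mathlib

section
/- With the construction below, for every k = 1, …, q one has ∫_{D_n} w_n(ω) cos(t_k ω) dω = 0; that is, w_n is orthogonal in L²(D_n) to each of the functions e_k(ω) = cos(t_k ω), k = 1, …, q. -/
open MeasureTheory Real Filter RealInnerProductSpace

noncomputable section

/-- The set `S_T = {t - s : t, s ∈ T}` of differences of elements of `T`. -/
def STfin (T : Finset ℤ) : Finset ℤ := (T ×ˢ T).image fun p => p.1 - p.2

/-- The set `P_T = {s ∈ S_T : s > 0}` of positive differences. -/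
def PTfin (T : Finset ℤ) : Finset ℤ := (STfin T).filter fun s => 0 < s

/-- The interval `D_n = (π - π/n, π)`. -/
def Dn (n : ℕ) : Set ℝ := Set.Ioo (π - π / n) π

/-- The set `D̃_n = (-π, -π + π/n) ∪ (π - π/n, π)`. -/
def Dtilde (n : ℕ) : Set ℝ := Set.Ioo (-π) (-π + π / n) ∪ Set.Ioo (π - π / n) π

/-- Lebesgue measure restricted to `D_n`. -/
def μn (n : ℕ) : Measure ℝ := volume.restrict (Dn n)

instance (n : ℕ) : IsFiniteMeasure (μn n) := by
  unfold μn Dn; infer_instance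

/-- The constant function `e₀ ≡ 1` as an element of `L²(D_n)`. -/
def e0Lp (n : ℕ) : Lp ℝ 2 (μn n) := (memLp_const (1 : ℝ)).toLp fun _ => (1 : ℝ)

lemma memLp_cos (n : ℕ) (k : ℤ) : MemLp (fun ω : ℝ => Real.cos (k * ω)) 2 (μn n) :=
  MemLp.of_bound (Continuous.aestronglyMeasurable (by continuity)) 1
    (ae_of_all _ fun ω => by simpa using Real.abs_cos_le_one (k * ω))

/-- The function `cos (k ω)` as an element of `L²(D_n)`. -/
def eLp (n : ℕ) (k : ℤ) : Lp ℝ 2 (μn n) := (memLp_cos n k).toLp fun ω => Real.cos (k * ω)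

/-- `t : Fin q → ℤ` enumerates `P_T` in such a way that the elements divisible by `n`
come first, being exactly `t_1, …, t_p` (0-based: `t k` for `k < p`). -/
def IsEnum (T : Finset ℤ) (n q p : ℕ) (t : Fin q → ℤ) : Prop :=
  Function.Injective t ∧ (∀ k, t k ∈ PTfin T) ∧ (∀ s ∈ PTfin T, ∃ k, t k = s) ∧
    ∀ k : Fin q, ((n : ℤ) ∣ t k ↔ (k : ℕ) < p)

/-- The Gram–Schmidt orthonormalisation `v_1, …, v_q` of `cos (t_1 ω), …, cos (t_q ω)`
in `L²(D_n)`. -/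
def vGS (n q : ℕ) (t : Fin q → ℤ) : Fin q → Lp ℝ 2 (μn n) :=
  @InnerProductSpace.gramSchmidtNormed ℝ _ _ _ _ (Fin q) _ _
    (inferInstance : WellFoundedLT (Fin q)) fun k => eLp n (t k)

/-- `ξ_n = e₀ - Σ_{k=p+1}^q ⟨e₀, v_k⟩ v_k`. -/
def xin (n q p : ℕ) (t : Fin q → ℤ) : Lp ℝ 2 (μn n) :=
  e0Lp n - ∑ k ∈ Finset.univ.filter (fun k : Fin q => p ≤ (k : ℕ)),
      ⟪e0Lp n, vGS n q t k⟫ • vGS n q t k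

/-- `w_n = (π - π/n) ξ_n / ⟨ξ_n, e₀⟩`. -/
def wn (n q p : ℕ) (t : Fin q → ℤ) : Lp ℝ 2 (μn n) :=
  ((π - π / n) / ⟪xin n q p t, e0Lp n⟫) • xin n q p t

/-- A representative of `w_n`, extended to negative frequencies by `w_n(-ω) = w_n(ω)`. -/
def wFun (n q p : ℕ) (t : Fin q → ℤ) (ω : ℝ) : ℝ := (wn n q p t : ℝ → ℝ) |ω|

/-- The transfer function `H̃_n`: equal to `1` for `|ω| < π - π/n` and to `-w_n(ω)` for
`π - π/n ≤ |ω| < π`. -/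
def Htilde (n q p : ℕ) (t : Fin q → ℤ) (ω : ℝ) : ℂ :=
  if |ω| < π - π / n then 1 else ((-(wFun n q p t ω) : ℝ) : ℂ)

/-- The kernel `h̃_n = Z⁻¹ H̃_n`. -/
def htilde (n q p : ℕ) (t : Fin q → ℤ) (τ : ℤ) : ℂ :=
  ((1 / (2 * π) : ℝ) : ℂ) *
    ∫ ω in (-π)..π, Htilde n q p t ω * Complex.exp (Complex.I * ω * τ)

/-- The recovering kernel `h_n`: `h̃_n` with the values on `S_T` replaced by `0`. -/
def hnKer (T : Finset ℤ) (n q p : ℕ) (t : Fin q → ℤ) (τ : ℤ) : ℂ :=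
  if τ ∈ STfin T then 0 else htilde n q p t τ

/-- Convolution of two sequences: `(h ∘ x)(t) = Σ_s h(t - s) x(s)`. -/
def conv (h x : ℤ → ℂ) (τ : ℤ) : ℂ := ∑' s : ℤ, h (τ - s) * x s

/-- The class `H_T` of kernels `h ∈ ℓ²` such that `(h ∘ x)(t)` depends only on the values
`x(s)`, `s ∉ T`, for all `t ∈ T`. -/
def HT (T : Finset ℤ) : Set (ℤ → ℂ) :=
  {h | Memℓp h 2 ∧ ∀ x : ℤ → ℂ, Memℓp x 2 → ∀ t ∈ T,
      conv h x t = ∑' s : {s : ℤ // s ∉ T}, h (t - (s : ℤ)) * x s}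

lemma integral_cos_Dn (n : ℕ) (hn : 1 < n) (s : ℤ) (hs : 0 < s) (hd : (n : ℤ) ∣ s) :
    ∫ ω in Dn n, Real.cos ((s : ℝ) * ω) = 0 := by
  obtain ⟨m, rfl⟩ := hd
  have hn0 : (0:ℝ) < n := by positivity
  have hlt : π - π / n < π := by
    have : 0 < π / n := by positivity
    linarith
  have hs0 : ((n : ℤ) * m : ℝ) ≠ 0 := by exact_mod_cast hs.ne'
  rw [Dn, ← MeasureTheory.integral_Ioc_eq_integral_Ioo,
    ← intervalIntegral.integral_of_le hlt.le]
  push_cast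
  rw [intervalIntegral.integral_comp_mul_left Real.cos (by exact_mod_cast hs0)]
  have h1 : Real.sin (((n : ℤ) * m : ℝ) * π) = 0 := by
    have := Real.sin_int_mul_pi ((n : ℤ) * m); exact_mod_cast this
  have h2 : Real.sin (((n : ℤ) * m : ℝ) * (π - π / n)) = 0 := by
    have hne : (n : ℝ) ≠ 0 := hn0.ne'
    have : ((n : ℤ) * m : ℝ) * (π - π / n) = ((n * m - m : ℤ) : ℝ) * π := by
      push_cast
      field_simp
    rw [this]
    exact Real.sin_int_mul_pi _
  push_cast at h1 h2
  simp [integral_cos, h1, h2]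

lemma inner_eq_integral (n : ℕ) (f g : Lp ℝ 2 (μn n)) :
    ⟪f, g⟫ = ∫ a, f a * g a ∂(μn n) := by
  rw [MeasureTheory.L2.inner_def]; simp [RCLike.inner_apply]
  exact integral_congr_ae (ae_of_all _ fun a => mul_comm _ _)

lemma inner_e0_eLp (n : ℕ) (hn : 1 < n) (s : ℤ) (hs : 0 < s) (hd : (n : ℤ) ∣ s) :
    ⟪e0Lp n, eLp n s⟫ = 0 := by
  rw [inner_eq_integral]
  have h1 : (e0Lp n : ℝ → ℝ) =ᵐ[μn n] fun _ => (1:ℝ) := MemLp.coeFn_toLp _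
  have h2 : (eLp n s : ℝ → ℝ) =ᵐ[μn n] fun ω => Real.cos (s * ω) := MemLp.coeFn_toLp _
  have : ∫ a, (e0Lp n : ℝ → ℝ) a * (eLp n s : ℝ → ℝ) a ∂(μn n)
      = ∫ a, Real.cos (s * a) ∂(μn n) := by
    refine integral_congr_ae ?_
    filter_upwards [h1, h2] with a ha hb
    rw [ha, hb, one_mul]
  rw [this]
  exact integral_cos_Dn n hn s hs hd

lemma inner_vGS_vGS (n q : ℕ) (t : Fin q → ℤ) {i j : Fin q} (hij : i ≠ j) :
    ⟪vGS n q t i, vGS n q t j⟫ = 0 := by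
  unfold vGS InnerProductSpace.gramSchmidtNormed
  rw [real_inner_smul_left, real_inner_smul_right]
  have h := @InnerProductSpace.gramSchmidt_orthogonal ℝ _ _ _ _ (Fin q) _ _
    (inferInstance : WellFoundedLT (Fin q)) (fun k => eLp n (t k)) i j hij
  simp [h]

lemma vGS_mem_span (n q : ℕ) (t : Fin q → ℤ) (j : Fin q) :
    vGS n q t j ∈ Submodule.span ℝ ((fun i => eLp n (t i)) '' Set.Iic j) := by
  unfold vGS InnerProductSpace.gramSchmidtNormed
  exact Submodule.smul_mem _ _
    (@InnerProductSpace.gramSchmidt_mem_span ℝ _ _ _ _ (Fin q) _ _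
      (inferInstance : WellFoundedLT (Fin q)) (fun i => eLp n (t i)) j j le_rfl)

lemma inner_e0_vGS (n q p : ℕ) (hn : 1 < n) (t : Fin q → ℤ)
    (hdvd : ∀ i : Fin q, (i : ℕ) < p → (n : ℤ) ∣ t i)
    (hpos : ∀ i : Fin q, 0 < t i) {j : Fin q} (hj : (j : ℕ) < p) :
    ⟪e0Lp n, vGS n q t j⟫ = 0 := by
  have hspan := vGS_mem_span n q t j
  have key : ∀ x ∈ Submodule.span ℝ ((fun i => eLp n (t i)) '' Set.Iic j),
      ⟪e0Lp n, x⟫ = 0 := by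
    intro x hx
    induction hx using Submodule.span_induction with
    | mem y hy =>
      obtain ⟨i, hi, rfl⟩ := hy
      exact inner_e0_eLp n hn (t i) (hpos i)
        (hdvd i (lt_of_le_of_lt (Fin.le_iff_val_le_val.mp hi) hj))
    | zero => simp
    | add y z _ _ hy hz => rw [inner_add_right, hy, hz, add_zero]
    | smul c y _ hy => rw [real_inner_smul_right, hy, mul_zero]
  exact key _ hspan

lemma inner_xin_vGS (n q p : ℕ) (hn : 1 < n) (t : Fin q → ℤ)
    (hdvd : ∀ i : Fin q, (i : ℕ) < p → (n : ℤ) ∣ t i)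
    (hpos : ∀ i : Fin q, 0 < t i) (j : Fin q) :
    ⟪xin n q p t, vGS n q t j⟫ = 0 := by
  rw [xin, inner_sub_left, sum_inner]
  simp_rw [real_inner_smul_left]
  by_cases hj : (j : ℕ) < p
  · have hsum : ∑ k ∈ Finset.univ.filter (fun k : Fin q => p ≤ (k : ℕ)),
        ⟪e0Lp n, vGS n q t k⟫ * ⟪vGS n q t k, vGS n q t j⟫ = 0 := by
      refine Finset.sum_eq_zero fun k hk => ?_
      have hk' : p ≤ (k : ℕ) := (Finset.mem_filter.mp hk).2
      have : k ≠ j := by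
        intro h; rw [h] at hk'; omega
      rw [inner_vGS_vGS n q t this, mul_zero]
    rw [hsum, inner_e0_vGS n q p hn t hdvd hpos hj, sub_zero]
  · push_neg at hj
    have hjmem : j ∈ Finset.univ.filter (fun k : Fin q => p ≤ (k : ℕ)) := by
      simp [hj]
    rw [Finset.sum_eq_single_of_mem j hjmem (fun k _ hkj => by
      rw [inner_vGS_vGS n q t hkj, mul_zero])]
    by_cases hv : vGS n q t j = 0
    · simp [hv]
    · have hnorm : ‖vGS n q t j‖ = 1 :=
        @InnerProductSpace.gramSchmidtNormed_unit_length' ℝ _ _ _ _ (Fin q) _ _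
          (inferInstance : WellFoundedLT (Fin q)) (fun i => eLp n (t i)) j hv
      have : ⟪vGS n q t j, vGS n q t j⟫ = 1 := by
        rw [real_inner_self_eq_norm_mul_norm, hnorm, one_mul]
      rw [this, mul_one, sub_self]

lemma inner_xin_eLp (n q p : ℕ) (hn : 1 < n) (t : Fin q → ℤ)
    (hdvd : ∀ i : Fin q, (i : ℕ) < p → (n : ℤ) ∣ t i)
    (hpos : ∀ i : Fin q, 0 < t i) (k : Fin q) :
    ⟪xin n q p t, eLp n (t k)⟫ = 0 := by
  have hmem : eLp n (t k) ∈ Submodule.span ℝ (vGS n q t '' Set.Iic k) := by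
    have h1 : eLp n (t k) ∈ Submodule.span ℝ
        (@InnerProductSpace.gramSchmidt ℝ _ _ _ _ (Fin q) _ _ (inferInstance : WellFoundedLT (Fin q))
          (fun i => eLp n (t i)) '' Set.Iic k) :=
      @InnerProductSpace.mem_span_gramSchmidt ℝ _ _ _ _ (Fin q) _ _
        (inferInstance : WellFoundedLT (Fin q)) (fun i => eLp n (t i)) k k le_rfl
    have h2 := @InnerProductSpace.span_gramSchmidtNormed ℝ _ _ _ _ (Fin q) _ _
      (inferInstance : WellFoundedLT (Fin q)) (fun i => eLp n (t i)) (Set.Iic k)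
    rw [show vGS n q t = @InnerProductSpace.gramSchmidtNormed ℝ _ _ _ _ (Fin q) _ _
      (inferInstance : WellFoundedLT (Fin q)) (fun i => eLp n (t i)) from rfl, h2]
    exact h1
  have key : ∀ x ∈ Submodule.span ℝ (vGS n q t '' Set.Iic k),
      ⟪xin n q p t, x⟫ = 0 := by
    intro x hx
    induction hx using Submodule.span_induction with
    | mem y hy =>
      obtain ⟨i, _, rfl⟩ := hy
      exact inner_xin_vGS n q p hn t hdvd hpos i
    | zero => simp
    | add y z _ _ hy hz => rw [inner_add_right, hy, hz, add_zero]
    | smul c y _ hy => rw [real_inner_smul_right, hy, mul_zero]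
  exact key _ hmem

/-- `w_n` is orthogonal in `L²(D_n)` to each of the functions `cos (t_k ω)`, `k = 1, …, q`:
`∫_{D_n} w_n(ω) cos (t_k ω) dω = 0`. -/
theorem wn_orthogonal_cos (T : Finset ℤ) (n : ℕ) (hn : 1 < n) (q p : ℕ)
    (t : Fin q → ℤ) (henum : IsEnum T n q p t) (k : Fin q) :
    (∫ ω in Dn n, (wn n q p t : ℝ → ℝ) ω * Real.cos ((t k : ℝ) * ω)) = 0 ∧
    ⟪wn n q p t, eLp n (t k)⟫ = 0 := by
  obtain ⟨hinj, hmem, hsurj, hdvd'⟩ := henum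
  have hdvd : ∀ i : Fin q, (i : ℕ) < p → (n : ℤ) ∣ t i := fun i hi => (hdvd' i).mpr hi
  have hpos : ∀ i : Fin q, 0 < t i := fun i => (Finset.mem_filter.mp (hmem i)).2
  have hinner : ⟪wn n q p t, eLp n (t k)⟫ = 0 := by
    rw [wn, real_inner_smul_left, inner_xin_eLp n q p hn t hdvd hpos k, mul_zero]
  refine ⟨?_, hinner⟩
  have h2 : (eLp n (t k) : ℝ → ℝ) =ᵐ[μn n] fun ω => Real.cos ((t k : ℝ) * ω) :=
    MemLp.coeFn_toLp _
  have heq : ∫ ω, (wn n q p t : ℝ → ℝ) ω * Real.cos ((t k : ℝ) * ω) ∂(μn n)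
      = ⟪wn n q p t, eLp n (t k)⟫ := by
    rw [inner_eq_integral]
    refine integral_congr_ae ?_
    filter_upwards [h2] with a ha
    rw [ha]
  exact heq.trans hinner

end
end

section
/- With the construction below, for every x ∈ X_T one has sup_{t∈ℤ} |x(t) − x̃_n(t)| → 0 as n → ∞, where x̃_n(t) = (1/2π)∫_{−π}^{π} H̃_n(e^{iω}) X(e^{iω}) e^{iωt} dω and X is the Z-transform of x. -/
open MeasureTheory Real Filter RealInnerProductSpace

noncomputable section

/-- `X` is (a representative of) the Z-transform of `x ∈ ℓ²(ℤ)`: `X ∈ L²((-π, π])` and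
the Fourier coefficients of `X` are the values of `x`. -/
def IsZTransform (x : ℤ → ℂ) (X : ℝ → ℂ) : Prop :=
  MemLp X 2 (volume.restrict (Set.Ioc (-π) π)) ∧
  ∀ τ : ℤ, x τ =
    ((1 / (2 * π) : ℝ) : ℂ) * ∫ ω in (-π)..π, X ω * Complex.exp (Complex.I * ω * τ)

/-! ### Auxiliary lemmas for the proof -/

lemma norm_exp_I_mul (ω : ℝ) (τ : ℤ) : ‖Complex.exp (Complex.I * ω * τ)‖ = 1 := by
  have h1 : Complex.I * (ω : ℂ) * (τ : ℂ) = ((ω * (τ : ℝ) : ℝ) : ℂ) * Complex.I := by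
    push_cast; ring
  rw [h1, Complex.norm_exp_ofReal_mul_I]

lemma pi_div_le_of_two_le {n : ℕ} (hn : 2 ≤ n) : π / n ≤ π / 2 := by
  have h2 : (2 : ℝ) ≤ (n : ℝ) := by exact_mod_cast hn
  have := pi_pos
  gcongr

lemma wFun_memℒp_pos {n qq pp : ℕ} {tt : Fin qq → ℤ} (hn : 2 ≤ n) :
    MemLp (wFun n qq pp tt) 2 (volume.restrict (Set.Ioo (π - π / n) π)) := by
  have hW : MemLp (fun ω => (wn n qq pp tt : ℝ → ℝ) ω) 2 (μn n) := Lp.memLp _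
  refine MemLp.ae_eq ?_ hW
  rw [Filter.EventuallyEq, ae_restrict_iff' measurableSet_Ioo]
  refine ae_of_all _ fun ω hω => ?_
  have h1 : π / n ≤ π / 2 := pi_div_le_of_two_le hn
  have h0 : 0 < ω := by have := hω.1; have := pi_pos; linarith
  simp [wFun, abs_of_pos h0]

lemma wFun_memℒp_neg {n qq pp : ℕ} {tt : Fin qq → ℤ} (hn : 2 ≤ n) :
    MemLp (wFun n qq pp tt) 2 (volume.restrict (Set.Ioo (-π) (-π + π / n))) := by
  have hW : MemLp (fun ω => (wn n qq pp tt : ℝ → ℝ) ω) 2 (μn n) := Lp.memLp _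
  have hpre : Neg.neg ⁻¹' Dn n = Set.Ioo (-π) (-π + π / n) := by
    ext ω
    simp only [Set.mem_preimage, Dn, Set.mem_Ioo]
    constructor
    · rintro ⟨h1, h2⟩; constructor <;> linarith
    · rintro ⟨h1, h2⟩; constructor <;> linarith
  have hmap : μn n = Measure.map Neg.neg (volume.restrict (Set.Ioo (-π) (-π + π / n))) := by
    show volume.restrict (Dn n) = _
    conv_lhs => rw [← Measure.map_neg_eq_self (volume : Measure ℝ)]
    rw [measurableEmbedding_neg.restrict_map, hpre]
  have hW2 : MemLp (fun ω => (wn n qq pp tt : ℝ → ℝ) ω) 2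
      (Measure.map Neg.neg (volume.restrict (Set.Ioo (-π) (-π + π / n)))) := by
    rw [← hmap]; exact hW
  have hcomp := hW2.comp_of_map measurable_neg.aemeasurable
  refine MemLp.ae_eq ?_ hcomp
  rw [Filter.EventuallyEq, ae_restrict_iff' measurableSet_Ioo]
  refine ae_of_all _ fun ω hω => ?_
  have h1 : π / n ≤ π / 2 := pi_div_le_of_two_le hn
  have h0 : ω < 0 := by have := hω.2; have := pi_pos; linarith
  simp [Function.comp, wFun, abs_of_neg h0]

lemma integrableOn_mul_of_memℒp {S : Set ℝ} {w : ℝ → ℝ} {f : ℝ → ℂ}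
    (hw : MemLp w 2 (volume.restrict S)) (hf : MemLp f 2 (volume.restrict S)) :
    IntegrableOn (fun ω => ((w ω : ℝ) : ℂ) * f ω) S volume := by
  have h := hf.smul (r := 1) hw (hpqr := ⟨by simp only [inv_one]; exact ENNReal.inv_two_add_inv_two⟩)
  rw [memLp_one_iff_integrable] at h
  have heq : (w • f) = fun ω => ((w ω : ℝ) : ℂ) * f ω := by
    funext ω
    simp [Pi.smul_apply, Complex.real_smul]
  rwa [heq] at h

lemma memℒp_mul_exp {S : Set ℝ} {f : ℝ → ℂ}
    (hf : MemLp f 2 (volume.restrict S)) (τ : ℤ) :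
    MemLp (fun ω => f ω * Complex.exp (Complex.I * ω * τ)) 2 (volume.restrict S) := by
  have hcont : Continuous fun ω : ℝ => Complex.exp (Complex.I * ω * τ) := by fun_prop
  refine MemLp.of_le_mul (c := 1) hf
    (hf.aestronglyMeasurable.mul hcont.aestronglyMeasurable) ?_
  refine ae_of_all _ fun ω => ?_
  rw [norm_mul, norm_exp_I_mul, mul_one, one_mul]

lemma Dtilde_subset_Ioo (n : ℕ) : Dtilde n ⊆ Set.Ioo (-π) π := by
  have hπ := pi_pos
  have h0 : 0 ≤ π / (n : ℝ) := by positivity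
  have hle : π / (n : ℝ) ≤ π := by
    rcases Nat.eq_zero_or_pos n with h | h
    · simp [h]; positivity
    · exact div_le_self hπ.le (by exact_mod_cast h)
  rintro ω (⟨h1, h2⟩ | ⟨h1, h2⟩) <;> exact ⟨by linarith, by linarith⟩

lemma tendsto_setIntegral_normX (X : ℝ → ℂ)
    (hX : MemLp X 2 (volume.restrict (Set.Ioc (-π) π))) :
    Tendsto (fun n : ℕ => ∫ ω in Dtilde n, ‖X ω‖) atTop (nhds 0) := by
  have hπ := pi_pos
  have hXint : Integrable X (volume.restrict (Set.Ioc (-π) π)) :=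
    hX.integrable one_le_two
  have hmeasD : ∀ n : ℕ, MeasurableSet (Dtilde n) := fun n =>
    measurableSet_Ioo.union measurableSet_Ioo
  have heq : ∀ n : ℕ, ∫ ω in Dtilde n, ‖X ω‖ =
      ∫ ω, (Dtilde n).indicator (fun ω => ‖X ω‖) ω ∂(volume.restrict (Set.Ioc (-π) π)) := by
    intro n
    rw [integral_indicator (hmeasD n), Measure.restrict_restrict (hmeasD n),
      Set.inter_eq_self_of_subset_left ((Dtilde_subset_Ioo n).trans Set.Ioo_subset_Ioc_self)]
  have hfun : (fun n : ℕ => ∫ ω in Dtilde n, ‖X ω‖) =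
      fun n : ℕ => ∫ ω, (Dtilde n).indicator (fun ω => ‖X ω‖) ω
        ∂(volume.restrict (Set.Ioc (-π) π)) := funext heq
  rw [hfun]
  have h0 : (0 : ℝ) = ∫ ω, (0 : ℝ) ∂(volume.restrict (Set.Ioc (-π) π)) := by simp
  rw [h0]
  refine tendsto_integral_of_dominated_convergence (fun ω => ‖X ω‖)
    (fun n => (hX.aestronglyMeasurable.norm).indicator (hmeasD n)) hXint.norm
    (fun n => ae_of_all _ fun ω => ?_) (ae_of_all _ fun ω => ?_)
  · exact (norm_indicator_le_norm_self _ _).trans (le_of_eq (norm_norm _))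
  · -- pointwise convergence to 0
    have hev : ∀ᶠ n : ℕ in atTop, (Dtilde n).indicator (fun ω => ‖X ω‖) ω = 0 := by
      rcases le_or_gt π |ω| with hω | hω
      · refine Eventually.of_forall fun n => Set.indicator_of_notMem (fun hmem => ?_) _
        have := Dtilde_subset_Ioo n hmem
        rcases this with ⟨h1, h2⟩
        rcases abs_cases ω with ⟨he, _⟩ | ⟨he, _⟩ <;> linarith
      · have hd : 0 < π - |ω| := by linarith
        obtain ⟨N, hN⟩ := exists_nat_gt (π / (π - |ω|))
        rw [eventually_atTop]
        refine ⟨N, fun n hn => Set.indicator_of_notMem (fun hmem => ?_) _⟩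
        have hN0 : (0 : ℝ) < N := lt_of_le_of_lt (by positivity) hN
        have hn0 : (0 : ℝ) < n := lt_of_lt_of_le hN0 (by exact_mod_cast hn)
        have hnN : (N : ℝ) ≤ n := by exact_mod_cast hn
        have hlt : π / n < π - |ω| := by
          rw [div_lt_iff₀ hn0]
          have : π / (π - |ω|) < (n : ℝ) := lt_of_lt_of_le hN hnN
          rw [div_lt_iff₀ hd] at this
          linarith
        have habs := abs_nonneg ω
        rcases hmem with ⟨h1, h2⟩ | ⟨h1, h2⟩
        · rcases abs_cases ω with ⟨he, _⟩ | ⟨he, _⟩ <;> linarith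
        · rcases abs_cases ω with ⟨he, _⟩ | ⟨he, _⟩ <;> linarith
    exact Tendsto.congr' (hev.mono fun n h => h.symm) tendsto_const_nhds

/-- For every `x ∈ X_T`, `sup_{t ∈ ℤ} |x(t) - x̃_n(t)| → 0` as `n → ∞`, where
`x̃_n(t) = (1/2π) ∫_{-π}^{π} H̃_n(e^{iω}) X(e^{iω}) e^{iωt} dω`. -/
theorem recovery_by_htilde (T : Finset ℤ) (q : ℕ) (hq : q = (PTfin T).card)
    (p : ℕ → ℕ) (t : ∀ n : ℕ, Fin q → ℤ)
    (henum : ∀ n : ℕ, 1 < n → IsEnum T n q (p n) (t n))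
    (x : ℤ → ℂ) (hx : Memℓp x 2) (X : ℝ → ℂ) (hX : IsZTransform x X)
    (hdeg : Tendsto
      (fun n : ℕ => ∫ ω in Dtilde n, ‖((wFun n q (p n) (t n) ω : ℝ) : ℂ) * X ω‖)
      atTop (nhds 0)) :
    ∀ ε > (0 : ℝ), ∃ N : ℕ, ∀ n ≥ N, ∀ τ : ℤ,
      ‖x τ - ((1 / (2 * π) : ℝ) : ℂ) *
          ∫ ω in (-π)..π,
            Htilde n q (p n) (t n) ω * X ω * Complex.exp (Complex.I * ω * τ)‖ ≤ ε := by
  intro ε hε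
  have hπ := pi_pos
  have ha := tendsto_setIntegral_normX X hX.1
  have hπε : (0 : ℝ) < π * ε := by positivity
  have hev : ∀ᶠ n : ℕ in atTop,
      ((∫ ω in Dtilde n, ‖X ω‖) < π * ε ∧
        (∫ ω in Dtilde n, ‖((wFun n q (p n) (t n) ω : ℝ) : ℂ) * X ω‖) < π * ε) ∧ 2 ≤ n :=
    ((ha.eventually (gt_mem_nhds hπε)).and (hdeg.eventually (gt_mem_nhds hπε))).and
      (eventually_ge_atTop 2)
  obtain ⟨N, hN⟩ := eventually_atTop.mp hev
  refine ⟨N, fun n hn τ => ?_⟩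
  obtain ⟨⟨haN, hbN⟩, hn2⟩ := hN n hn
  -- notation
  have hπn2 : π / n ≤ π / 2 := pi_div_le_of_two_le hn2
  have hS1sub : Set.Ioo (-π) (-π + π / n) ⊆ Set.Ioc (-π) π := fun ω hω =>
    ⟨hω.1, by have := hω.2; linarith⟩
  have hS2sub : Set.Ioo (π - π / n) π ⊆ Set.Ioc (-π) π := fun ω hω => by
    refine ⟨?_, hω.2.le⟩
    have h1 := hω.1
    linarith
  have hXS1 : MemLp X 2 (volume.restrict (Set.Ioo (-π) (-π + π / n))) :=
    hX.1.mono_measure (Measure.restrict_mono hS1sub le_rfl)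
  have hXS2 : MemLp X 2 (volume.restrict (Set.Ioo (π - π / n) π)) :=
    hX.1.mono_measure (Measure.restrict_mono hS2sub le_rfl)
  have hw1 : MemLp (wFun n q (p n) (t n)) 2
      (volume.restrict (Set.Ioo (-π) (-π + π / n))) := wFun_memℒp_neg hn2
  have hw2 : MemLp (wFun n q (p n) (t n)) 2
      (volume.restrict (Set.Ioo (π - π / n) π)) := wFun_memℒp_pos hn2
  have h1w1 : MemLp (fun ω => 1 + wFun n q (p n) (t n) ω) 2
      (volume.restrict (Set.Ioo (-π) (-π + π / n))) := (memLp_const (1 : ℝ)).add hw1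
  have h1w2 : MemLp (fun ω => 1 + wFun n q (p n) (t n) ω) 2
      (volume.restrict (Set.Ioo (π - π / n) π)) := (memLp_const (1 : ℝ)).add hw2
  -- integrability of the three relevant functions on `Dtilde n`
  have hDint : IntegrableOn
      (fun ω => ((1 + wFun n q (p n) (t n) ω : ℝ) : ℂ) *
        (X ω * Complex.exp (Complex.I * ω * τ))) (Dtilde n) volume :=
    (integrableOn_mul_of_memℒp h1w1 (memℒp_mul_exp hXS1 τ)).union
      (integrableOn_mul_of_memℒp h1w2 (memℒp_mul_exp hXS2 τ))
  have hwXint : IntegrableOn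
      (fun ω => ((wFun n q (p n) (t n) ω : ℝ) : ℂ) * X ω) (Dtilde n) volume :=
    (integrableOn_mul_of_memℒp hw1 hXS1).union (integrableOn_mul_of_memℒp hw2 hXS2)
  have hXD : IntegrableOn X (Dtilde n) volume :=
    MeasureTheory.IntegrableOn.mono_set (hX.1.integrable one_le_two)
      ((Dtilde_subset_Ioo n).trans Set.Ioo_subset_Ioc_self)
  have hGint : Integrable (fun ω => X ω * Complex.exp (Complex.I * ω * τ))
      (volume.restrict (Set.Ioc (-π) π)) := (memℒp_mul_exp hX.1 τ).integrable one_le_two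
  -- the bad set
  have hB'meas : MeasurableSet {ω : ℝ | π - π / n ≤ |ω|} :=
    measurableSet_le measurable_const continuous_abs.measurable
  -- pointwise identity
  have hFD : (fun ω => Htilde n q (p n) (t n) ω * X ω * Complex.exp (Complex.I * ω * τ)) =
      fun ω => X ω * Complex.exp (Complex.I * ω * τ) -
        Set.indicator {ω : ℝ | π - π / n ≤ |ω|}
          (fun ω => ((1 + wFun n q (p n) (t n) ω : ℝ) : ℂ) *
            (X ω * Complex.exp (Complex.I * ω * τ))) ω := by
    funext ω
    by_cases h : |ω| < π - π / n
    · have hnot : ω ∉ {ω : ℝ | π - π / n ≤ |ω|} := by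
        simp only [Set.mem_setOf_eq, not_le]; exact h
      rw [Set.indicator_of_notMem hnot, Htilde, if_pos h]
      ring
    · have hmem : ω ∈ {ω : ℝ | π - π / n ≤ |ω|} := not_lt.1 h
      rw [Set.indicator_of_mem hmem, Htilde, if_neg h]
      push_cast
      ring
  -- the bad set coincides a.e. with `Dtilde n`
  have hBD : ({ω : ℝ | π - π / n ≤ |ω|} ∩ Set.Ioc (-π) π : Set ℝ) =ᵐ[volume] Dtilde n := by
    rw [ae_eq_set]
    constructor
    · refine measure_mono_null (t := {-(π - π / n), π - π / n, π}) ?_ ?_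
      · rintro ω ⟨⟨hB, hIoc1, hIoc2⟩, hD⟩
        simp only [Dtilde, Set.mem_union, Set.mem_Ioo, not_or, not_and, not_lt] at hD
        simp only [Set.mem_setOf_eq] at hB
        obtain ⟨hD1, hD2⟩ := hD
        simp only [Set.mem_insert_iff, Set.mem_singleton_iff]
        rcases le_or_gt 0 ω with h0 | h0
        · rw [abs_of_nonneg h0] at hB
          rcases eq_or_lt_of_le hIoc2 with hπe | hπl
          · right; right; exact hπe
          · right; left
            rcases lt_or_ge (π - π / n) ω with hlt | hle2
            · exact absurd (hD2 hlt) (not_le.2 hπl)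
            · linarith
        · rw [abs_of_neg h0] at hB
          left
          have h1 := hD1 hIoc1
          linarith
      · exact (Set.toFinite _).measure_zero _
    · have hempty : Dtilde n \ ({ω : ℝ | π - π / n ≤ |ω|} ∩ Set.Ioc (-π) π) = ∅ := by
        rw [Set.diff_eq_empty]
        rintro ω (⟨h1, h2⟩ | ⟨h1, h2⟩)
        · refine ⟨?_, h1, by linarith⟩
          have hω0 : ω < 0 := by linarith
          simp only [Set.mem_setOf_eq, abs_of_neg hω0]
          linarith
        · have h0 : 0 ≤ π / (n : ℝ) := by positivity
          refine ⟨?_, by linarith, h2.le⟩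
          have hω0 : 0 < ω := by linarith
          simp only [Set.mem_setOf_eq, abs_of_pos hω0]
          linarith
      rw [hempty]
      exact measure_empty
  -- integrability of `Htilde * X * exp`
  have hFint : Integrable
      (fun ω => Htilde n q (p n) (t n) ω * X ω * Complex.exp (Complex.I * ω * τ))
      (volume.restrict (Set.Ioc (-π) π)) := by
    rw [hFD]
    refine hGint.sub ?_
    rw [integrable_indicator_iff hB'meas]
    rw [IntegrableOn, Measure.restrict_restrict hB'meas, Measure.restrict_congr_set hBD]
    exact hDint
  -- main computation
  have hle : -π ≤ π := by linarith
  rw [hX.2 τ, ← mul_sub, intervalIntegral.integral_of_le hle,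
    intervalIntegral.integral_of_le hle, ← integral_sub hGint hFint]
  have hint_eq : ∫ ω in Set.Ioc (-π) π,
      (X ω * Complex.exp (Complex.I * ω * τ) -
        Htilde n q (p n) (t n) ω * X ω * Complex.exp (Complex.I * ω * τ)) =
      ∫ ω in Dtilde n, ((1 + wFun n q (p n) (t n) ω : ℝ) : ℂ) *
        (X ω * Complex.exp (Complex.I * ω * τ)) := by
    have h1 : ∀ ω, X ω * Complex.exp (Complex.I * ω * τ) -
        Htilde n q (p n) (t n) ω * X ω * Complex.exp (Complex.I * ω * τ) =
        Set.indicator {ω : ℝ | π - π / n ≤ |ω|}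
          (fun ω => ((1 + wFun n q (p n) (t n) ω : ℝ) : ℂ) *
            (X ω * Complex.exp (Complex.I * ω * τ))) ω := by
      intro ω
      rw [congrFun hFD ω]
      ring
    rw [integral_congr_ae (ae_of_all _ h1), integral_indicator hB'meas,
      Measure.restrict_restrict hB'meas, Measure.restrict_congr_set hBD]
  rw [hint_eq, norm_mul]
  have hc0 : ‖((1 / (2 * π) : ℝ) : ℂ)‖ = 1 / (2 * π) := by
    rw [Complex.norm_real, Real.norm_eq_abs, abs_of_pos (by positivity)]
  have hnorm : ‖∫ ω in Dtilde n, ((1 + wFun n q (p n) (t n) ω : ℝ) : ℂ) *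
      (X ω * Complex.exp (Complex.I * ω * τ))‖ ≤
      (∫ ω in Dtilde n, ‖X ω‖) +
        ∫ ω in Dtilde n, ‖((wFun n q (p n) (t n) ω : ℝ) : ℂ) * X ω‖ := by
    have hgint : Integrable
        (fun ω => ‖X ω‖ + ‖((wFun n q (p n) (t n) ω : ℝ) : ℂ) * X ω‖)
        (volume.restrict (Dtilde n)) := hXD.norm.add hwXint.norm
    refine (norm_integral_le_of_norm_le hgint (ae_of_all _ fun ω => ?_)).trans
      (le_of_eq (integral_add hXD.norm hwXint.norm))
    rw [norm_mul, norm_mul, norm_mul, norm_exp_I_mul, mul_one,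
      Complex.norm_real, Complex.norm_real, Real.norm_eq_abs, Real.norm_eq_abs]
    have h1 : |1 + wFun n q (p n) (t n) ω| ≤ 1 + |wFun n q (p n) (t n) ω| :=
      (abs_add_le _ _).trans (by rw [abs_one])
    have h2 : (0 : ℝ) ≤ ‖X ω‖ := norm_nonneg _
    nlinarith [abs_nonneg (wFun n q (p n) (t n) ω)]
  rw [hc0]
  have hfinal : (1 / (2 * π)) * (π * ε + π * ε) = ε := by
    field_simp
    ring
  calc (1 / (2 * π)) * ‖∫ ω in Dtilde n, ((1 + wFun n q (p n) (t n) ω : ℝ) : ℂ) *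
      (X ω * Complex.exp (Complex.I * ω * τ))‖ ≤
      (1 / (2 * π)) * (π * ε + π * ε) := by
        refine mul_le_mul_of_nonneg_left ?_ (by positivity)
        calc _ ≤ _ := hnorm
        _ ≤ π * ε + π * ε := add_le_add haN.le hbN.le
  _ = ε := hfinal

end
end
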